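/- arXiv:2307.04614 — 5 statements merged into one kernel-verified Lean document; each statement's English description precedes it below -/
import Mathlib

section
/- Let (Ω, F, ℙ) be a probability space, T > 0, B ∈ ℝ^{n×m}, and let Φ : {(t,s) : 0 ≤ s ≤ t ≤ T} × Ω → ℝ^{n×n} be jointly measurable with Φ(τ) := Φ(τ,0) and with all Bochner integrals below existing. Assume the weak semigroup property in second moments: E[Φ(t,s) B Bᵀ Φ(t,s)ᵀ] = E[Φ(t−s) B Bᵀ Φ(t−s)ᵀ] for all 0 ≤ s ≤ t ≤ T. Let u : [0,T] → ℝ^m be a deterministic square-integrable control and set x_u(t,ω) := ∫₀ᵗ Φ(t,s,ω) B u(s) ds. Define P_{u,T} := E[∫₀ᵀ Φ(s) B Bᵀ Φ(s)ᵀ ds]. Then for every w ∈ ℝ^n and every t ∈ [0,T], E[⟨x_u(t), w⟩²] ≤ (wᵀ P_{u,T} w) · ∫₀ᵀ ‖u(s)‖₂² ds. -/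
open MeasureTheory Matrix

attribute [local instance] Matrix.normedAddCommGroup Matrix.normedSpace

instance matrixContinuousENormOfNorm {m n : Type*} [Fintype m] [Fintype n] :
    ContinuousENorm (Matrix m n ℝ) :=
  SeminormedAddGroup.toContinuousENorm

/-- Cauchy–Schwarz for integrals of nonnegative functions. -/
lemma gdsc_integral_cauchy_schwarz {α : Type*} [MeasurableSpace α] (ν : Measure α)
    (F G : α → ℝ) (hF : ∀ x, 0 ≤ F x) (hG : ∀ x, 0 ≤ G x)
    (hFm : AEStronglyMeasurable F ν) (hGm : AEStronglyMeasurable G ν)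
    (hF2 : Integrable (fun x => F x ^ 2) ν) (hG2 : Integrable (fun x => G x ^ 2) ν) :
    (∫ x, F x * G x ∂ν) ^ 2 ≤ (∫ x, F x ^ 2 ∂ν) * (∫ x, G x ^ 2 ∂ν) := by
  have hpq : (2 : ℝ).HolderConjugate 2 := ⟨by norm_num, by norm_num, by norm_num⟩
  have h2 : (ENNReal.ofReal (2:ℝ)) = 2 := by
    rw [ENNReal.ofReal_ofNat]
  have hFL : MemLp F (ENNReal.ofReal (2:ℝ)) ν := by
    rw [h2]; exact (memLp_two_iff_integrable_sq hFm).2 hF2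
  have hGL : MemLp G (ENNReal.ofReal (2:ℝ)) ν := by
    rw [h2]; exact (memLp_two_iff_integrable_sq hGm).2 hG2
  have h := integral_mul_le_Lp_mul_Lq_of_nonneg hpq (Filter.Eventually.of_forall hF)
    (Filter.Eventually.of_forall hG) hFL hGL
  have hr : ∀ x : ℝ, x ^ (2:ℝ) = x ^ 2 := fun x => by
    rw [show (2:ℝ) = ((2:ℕ):ℝ) by norm_num, Real.rpow_natCast]
  simp only [hr] at h
  have hFnn : (0:ℝ) ≤ ∫ x, F x ^ 2 ∂ν := integral_nonneg fun x => sq_nonneg _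
  have hGnn : (0:ℝ) ≤ ∫ x, G x ^ 2 ∂ν := integral_nonneg fun x => sq_nonneg _
  have hlnn : (0:ℝ) ≤ ∫ x, F x * G x ∂ν :=
    integral_nonneg fun x => mul_nonneg (hF x) (hG x)
  calc (∫ x, F x * G x ∂ν) ^ 2
      ≤ ((∫ x, F x ^ 2 ∂ν) ^ ((1:ℝ)/2) * (∫ x, G x ^ 2 ∂ν) ^ ((1:ℝ)/2)) ^ 2 :=
        pow_le_pow_left₀ hlnn h 2
    _ = (∫ x, F x ^ 2 ∂ν) * (∫ x, G x ^ 2 ∂ν) := by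
        rw [mul_pow, ← Real.rpow_natCast ((∫ x, F x ^ 2 ∂ν) ^ ((1:ℝ)/2)) 2,
          ← Real.rpow_natCast ((∫ x, G x ^ 2 ∂ν) ^ ((1:ℝ)/2)) 2,
          ← Real.rpow_mul hFnn, ← Real.rpow_mul hGnn]
        norm_num

lemma gdsc_dot_aux {n m : ℕ} (M : Matrix (Fin n) (Fin n) ℝ) (B : Matrix (Fin n) (Fin m) ℝ)
    (x : Fin m → ℝ) (w : Fin n → ℝ) :
    (M *ᵥ (B *ᵥ x)) ⬝ᵥ w = (Bᵀ *ᵥ (Mᵀ *ᵥ w)) ⬝ᵥ x := by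
  rw [mulVec_mulVec, mulVec_mulVec, ← transpose_mul, dotProduct_comm,
    dotProduct_mulVec, mulVec_transpose]

lemma gdsc_quad_eq {n m : ℕ} (M : Matrix (Fin n) (Fin n) ℝ) (B : Matrix (Fin n) (Fin m) ℝ)
    (w : Fin n → ℝ) :
    w ⬝ᵥ (M * B * Bᵀ * Mᵀ) *ᵥ w = ∑ j, (Bᵀ *ᵥ (Mᵀ *ᵥ w)) j ^ 2 := by
  have hM : M * B * Bᵀ * Mᵀ = (Bᵀ * Mᵀ)ᵀ * (Bᵀ * Mᵀ) := by
    rw [transpose_mul, transpose_transpose, transpose_transpose, Matrix.mul_assoc,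
      Matrix.mul_assoc]
  rw [hM, ← mulVec_mulVec, dotProduct_mulVec, mulVec_transpose, vecMul_transpose]
  simp only [← mulVec_mulVec, mulVec_transpose]
  simp [dotProduct, sq]

/-- The quadratic form `M ↦ w ⬝ᵥ M *ᵥ w` as a continuous linear map on matrices. -/
noncomputable def gdscQuadCLM (n : ℕ) (w : Fin n → ℝ) : Matrix (Fin n) (Fin n) ℝ →L[ℝ] ℝ :=
  LinearMap.toContinuousLinearMap
    { toFun := fun M => w ⬝ᵥ M *ᵥ w
      map_add' := fun A C => by simp [Matrix.add_mulVec, dotProduct_add]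
      map_smul' := fun c A => by simp [Matrix.smul_mulVec, dotProduct_smul, smul_eq_mul] }

@[simp] lemma gdscQuadCLM_apply {n : ℕ} (w : Fin n → ℝ) (M : Matrix (Fin n) (Fin n) ℝ) :
    gdscQuadCLM n w M = w ⬝ᵥ M *ᵥ w := rfl

/-- The linear form `v ↦ v ⬝ᵥ w` as a continuous linear map. -/
noncomputable def gdscDotCLM (n : ℕ) (w : Fin n → ℝ) : (Fin n → ℝ) →L[ℝ] ℝ :=
  LinearMap.toContinuousLinearMap
    { toFun := fun v => v ⬝ᵥ w
      map_add' := fun a b => by simp [add_dotProduct]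
      map_smul' := fun c a => by simp [smul_dotProduct, smul_eq_mul] }

@[simp] lemma gdscDotCLM_apply {n : ℕ} (w : Fin n → ℝ) (v : Fin n → ℝ) :
    gdscDotCLM n w v = v ⬝ᵥ w := rfl

set_option maxHeartbeats 1000000 in
/-- Let `Φ(t,s)` be the two-parameter fundamental solution process (with `Φ(τ) := Φ(τ,0)`)
satisfying the weak semigroup property in second moments
`E[Φ(t,s) B Bᵀ Φ(t,s)ᵀ] = E[Φ(t−s) B Bᵀ Φ(t−s)ᵀ]` for `0 ≤ s ≤ t ≤ T`.  For a deterministic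
square-integrable control `u`, the controlled solution `x_u(t) = ∫₀ᵗ Φ(t,s) B u(s) ds` and the
reachability Gramian `P_{u,T} = E[∫₀ᵀ Φ(s) B Bᵀ Φ(s)ᵀ ds]` satisfy
`E[⟨x_u(t), w⟩²] ≤ (wᵀ P_{u,T} w) ∫₀ᵀ ‖u(s)‖₂² ds` for all `w` and all `t ∈ [0,T]`. -/
theorem gramian_dominant_subspace_control
    {n m : ℕ} {Ω : Type*} [MeasurableSpace Ω] (μ : Measure Ω) [IsProbabilityMeasure μ]
    (T : ℝ) (hT : 0 < T)
    (Φ : ℝ → ℝ → Ω → Matrix (Fin n) (Fin n) ℝ)  -- Φ t s ω, defined for 0 ≤ s ≤ t ≤ T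
    (B : Matrix (Fin n) (Fin m) ℝ)
    (u : ℝ → Fin m → ℝ)
    (hu : IntegrableOn (fun s => ∑ i, u s i ^ 2) (Set.Icc (0 : ℝ) T))
    (hsemi : ∀ s t : ℝ, 0 ≤ s → s ≤ t → t ≤ T →
      (∫ ω, Φ t s ω * B * Bᵀ * (Φ t s ω)ᵀ ∂μ)
        = ∫ ω, Φ (t - s) 0 ω * B * Bᵀ * (Φ (t - s) 0 ω)ᵀ ∂μ)
    (hint : Integrable (fun p : ℝ × Ω => Φ p.1 0 p.2 * B * Bᵀ * (Φ p.1 0 p.2)ᵀ)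
      ((volume.restrict (Set.Icc 0 T)).prod μ))
    (hint2 : ∀ t ∈ Set.Icc (0 : ℝ) T,
      Integrable (fun p : ℝ × Ω => Φ t p.1 p.2 * B * Bᵀ * (Φ t p.1 p.2)ᵀ)
        ((volume.restrict (Set.Icc 0 t)).prod μ))
    (xu : ℝ → Ω → Fin n → ℝ)
    (hxu : ∀ t ω, xu t ω = ∫ s in Set.Icc (0 : ℝ) t, Φ t s ω *ᵥ (B *ᵥ u s))
    (P : Matrix (Fin n) (Fin n) ℝ)
    (hP : P = ∫ ω, (∫ s in Set.Icc (0 : ℝ) T, Φ s 0 ω * B * Bᵀ * (Φ s 0 ω)ᵀ) ∂μ)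
    (w : Fin n → ℝ) (t : ℝ) (ht : t ∈ Set.Icc (0 : ℝ) T) :
    (∫ ω, (xu t ω ⬝ᵥ w) ^ 2 ∂μ)
      ≤ (w ⬝ᵥ P *ᵥ w) * ∫ s in Set.Icc (0 : ℝ) T, ∑ i, u s i ^ 2 := by
  classical
  have ht0 : (0:ℝ) ≤ t := ht.1
  have htT : t ≤ T := ht.2
  set C : ℝ := ∫ s in Set.Icc (0 : ℝ) T, ∑ i, u s i ^ 2 with hCdef
  have hC0 : 0 ≤ C :=
    setIntegral_nonneg measurableSet_Icc fun s _ => Finset.sum_nonneg fun i _ => sq_nonneg _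
  -- integrability of the quadratic form of the time-t kernel on the product space
  have hgint : Integrable
      (fun p : ℝ × Ω => w ⬝ᵥ (Φ t p.1 p.2 * B * Bᵀ * (Φ t p.1 p.2)ᵀ) *ᵥ w)
      ((volume.restrict (Set.Icc 0 t)).prod μ) :=
    (gdscQuadCLM n w).integrable_comp (hint2 t ht)
  have hae : ∀ᵐ ω ∂μ, Integrable
      (fun s => w ⬝ᵥ (Φ t s ω * B * Bᵀ * (Φ t s ω)ᵀ) *ᵥ w)
      (volume.restrict (Set.Icc 0 t)) := hgint.prod_left_ae
  -- pointwise (in ω) Cauchy–Schwarz estimate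
  have key : ∀ ω : Ω, Integrable
      (fun s => w ⬝ᵥ (Φ t s ω * B * Bᵀ * (Φ t s ω)ᵀ) *ᵥ w)
      (volume.restrict (Set.Icc 0 t)) →
      (xu t ω ⬝ᵥ w) ^ 2 ≤
        (∫ s in Set.Icc (0:ℝ) t, w ⬝ᵥ (Φ t s ω * B * Bᵀ * (Φ t s ω)ᵀ) *ᵥ w) * C := by
    intro ω hH
    have hHnn : (0:ℝ) ≤ ∫ s in Set.Icc (0:ℝ) t,
        w ⬝ᵥ (Φ t s ω * B * Bᵀ * (Φ t s ω)ᵀ) *ᵥ w :=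
      setIntegral_nonneg measurableSet_Icc fun s _ => by
        rw [gdsc_quad_eq]; positivity
    by_cases hv : IntegrableOn (fun s => Φ t s ω *ᵥ (B *ᵥ u s)) (Set.Icc 0 t) volume
    · -- main case
      have hxw : xu t ω ⬝ᵥ w
          = ∫ s in Set.Icc (0:ℝ) t, (Bᵀ *ᵥ ((Φ t s ω)ᵀ *ᵥ w)) ⬝ᵥ u s := by
        rw [hxu]
        calc (∫ s in Set.Icc (0:ℝ) t, Φ t s ω *ᵥ (B *ᵥ u s)) ⬝ᵥ w
            = ∫ s in Set.Icc (0:ℝ) t, (Φ t s ω *ᵥ (B *ᵥ u s)) ⬝ᵥ w :=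
              (ContinuousLinearMap.integral_comp_comm (gdscDotCLM n w) hv).symm
          _ = ∫ s in Set.Icc (0:ℝ) t, (Bᵀ *ᵥ ((Φ t s ω)ᵀ *ᵥ w)) ⬝ᵥ u s :=
              integral_congr_ae (Filter.Eventually.of_forall fun s => gdsc_dot_aux _ _ _ _)
      set H : ℝ → ℝ := fun s => ∑ j, (Bᵀ *ᵥ ((Φ t s ω)ᵀ *ᵥ w)) j ^ 2 with hHdef
      set U : ℝ → ℝ := fun s => ∑ i, u s i ^ 2 with hUdef
      have hHeq : ∀ s, H s = w ⬝ᵥ (Φ t s ω * B * Bᵀ * (Φ t s ω)ᵀ) *ᵥ w :=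
        fun s => (gdsc_quad_eq _ _ _).symm
      have hHnn' : ∀ s, 0 ≤ H s := fun s => Finset.sum_nonneg fun j _ => sq_nonneg _
      have hUnn : ∀ s, 0 ≤ U s := fun s => Finset.sum_nonneg fun i _ => sq_nonneg _
      have hHint : Integrable H (volume.restrict (Set.Icc 0 t)) :=
        hH.congr (Filter.Eventually.of_forall fun s => (hHeq s).symm)
      have hUint : Integrable U (volume.restrict (Set.Icc 0 t)) :=
        hu.mono_set (Set.Icc_subset_Icc le_rfl htT)
      set F : ℝ → ℝ := fun s => Real.sqrt (H s) with hFdef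
      set G : ℝ → ℝ := fun s => Real.sqrt (U s) with hGdef
      have hFm : AEStronglyMeasurable F (volume.restrict (Set.Icc 0 t)) :=
        Real.continuous_sqrt.comp_aestronglyMeasurable hHint.aestronglyMeasurable
      have hGm : AEStronglyMeasurable G (volume.restrict (Set.Icc 0 t)) :=
        Real.continuous_sqrt.comp_aestronglyMeasurable hUint.aestronglyMeasurable
      have hF2 : (fun s => F s ^ 2) = H := funext fun s => Real.sq_sqrt (hHnn' s)
      have hG2 : (fun s => G s ^ 2) = U := funext fun s => Real.sq_sqrt (hUnn s)
      have hCS := gdsc_integral_cauchy_schwarz (volume.restrict (Set.Icc 0 t)) F G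
        (fun s => Real.sqrt_nonneg _) (fun s => Real.sqrt_nonneg _) hFm hGm
        (hF2 ▸ hHint) (hG2 ▸ hUint)
      rw [show (fun x => F x ^ 2) = H from hF2] at hCS
      rw [show (fun x => G x ^ 2) = U from hG2] at hCS
      -- pointwise bound on the inner product by the product of norms
      have hptw : ∀ s, |(Bᵀ *ᵥ ((Φ t s ω)ᵀ *ᵥ w)) ⬝ᵥ u s| ≤ F s * G s := by
        intro s
        have h1 : ((Bᵀ *ᵥ ((Φ t s ω)ᵀ *ᵥ w)) ⬝ᵥ u s) ^ 2 ≤ H s * U s := by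
          have := Finset.sum_mul_sq_le_sq_mul_sq Finset.univ
            (fun j => (Bᵀ *ᵥ ((Φ t s ω)ᵀ *ᵥ w)) j) (u s)
          simpa [dotProduct, hHdef, hUdef] using this
        calc |(Bᵀ *ᵥ ((Φ t s ω)ᵀ *ᵥ w)) ⬝ᵥ u s|
            = Real.sqrt (((Bᵀ *ᵥ ((Φ t s ω)ᵀ *ᵥ w)) ⬝ᵥ u s) ^ 2) :=
              (Real.sqrt_sq_eq_abs _).symm
          _ ≤ Real.sqrt (H s * U s) := Real.sqrt_le_sqrt h1
          _ = F s * G s := Real.sqrt_mul (hHnn' s) _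
      have hFG : Integrable (fun s => F s * G s) (volume.restrict (Set.Icc 0 t)) := by
        refine Integrable.mono' ((hHint.add hUint).div_const 2) (hFm.mul hGm) ?_
        refine Filter.Eventually.of_forall fun s => ?_
        have e1 : F s ^ 2 = H s := by rw [hFdef]; exact Real.sq_sqrt (hHnn' s)
        have e2 : G s ^ 2 = U s := by rw [hGdef]; exact Real.sq_sqrt (hUnn s)
        have e3 : (H + U) s = H s + U s := rfl
        rw [Real.norm_of_nonneg (mul_nonneg (Real.sqrt_nonneg _) (Real.sqrt_nonneg _)), e3]
        nlinarith [sq_nonneg (F s - G s), e1, e2]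
      have habs : |∫ s in Set.Icc (0:ℝ) t, (Bᵀ *ᵥ ((Φ t s ω)ᵀ *ᵥ w)) ⬝ᵥ u s|
          ≤ ∫ s in Set.Icc (0:ℝ) t, F s * G s := by
        rw [← Real.norm_eq_abs]
        refine (norm_integral_le_integral_norm _).trans ?_
        refine integral_mono_of_nonneg
          (Filter.Eventually.of_forall fun s => norm_nonneg _) hFG ?_
        refine Filter.Eventually.of_forall fun s => ?_
        simpa [Real.norm_eq_abs] using hptw s
      have hUmono : ∫ s in Set.Icc (0:ℝ) t, U s ≤ C := by
        rw [hCdef]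
        exact setIntegral_mono_set hu
          (Filter.Eventually.of_forall fun s => hUnn s)
          ((Set.Icc_subset_Icc le_rfl htT).eventuallyLE)
      calc (xu t ω ⬝ᵥ w) ^ 2
          = (∫ s in Set.Icc (0:ℝ) t, (Bᵀ *ᵥ ((Φ t s ω)ᵀ *ᵥ w)) ⬝ᵥ u s) ^ 2 := by rw [hxw]
        _ = |∫ s in Set.Icc (0:ℝ) t, (Bᵀ *ᵥ ((Φ t s ω)ᵀ *ᵥ w)) ⬝ᵥ u s| ^ 2 := (sq_abs _).symm
        _ ≤ (∫ s in Set.Icc (0:ℝ) t, F s * G s) ^ 2 :=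
            pow_le_pow_left₀ (abs_nonneg _) habs 2
        _ ≤ (∫ s in Set.Icc (0:ℝ) t, H s) * ∫ s in Set.Icc (0:ℝ) t, U s := hCS
        _ ≤ (∫ s in Set.Icc (0:ℝ) t, H s) * C := by
            refine mul_le_mul_of_nonneg_left hUmono ?_
            exact integral_nonneg fun s => hHnn' s
        _ = (∫ s in Set.Icc (0:ℝ) t, w ⬝ᵥ (Φ t s ω * B * Bᵀ * (Φ t s ω)ᵀ) *ᵥ w) * C := by
            congr 1
            exact integral_congr_ae (Filter.Eventually.of_forall fun s => hHeq s)
    · -- degenerate case: the defining integral does not exist, so `xu t ω = 0`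
      rw [hxu, integral_undef hv]
      simpa using mul_nonneg hHnn hC0
  -- the expected Gramian quadratic form at time τ
  set q : ℝ → ℝ := fun τ => w ⬝ᵥ (∫ ω, Φ τ 0 ω * B * Bᵀ * (Φ τ 0 ω)ᵀ ∂μ) *ᵥ w with hqdef
  have hq0 : ∀ τ, 0 ≤ q τ := by
    intro τ
    by_cases hτ : Integrable (fun ω => Φ τ 0 ω * B * Bᵀ * (Φ τ 0 ω)ᵀ) μ
    · have hcomm := ContinuousLinearMap.integral_comp_comm (gdscQuadCLM n w) hτ
      have hnn : (0:ℝ) ≤ ∫ ω, w ⬝ᵥ (Φ τ 0 ω * B * Bᵀ * (Φ τ 0 ω)ᵀ) *ᵥ w ∂μ :=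
        integral_nonneg fun ω => by
          rw [gdsc_quad_eq]; positivity
      show (0:ℝ) ≤ w ⬝ᵥ (∫ ω, Φ τ 0 ω * B * Bᵀ * (Φ τ 0 ω)ᵀ ∂μ) *ᵥ w
      exact hnn.trans_eq hcomm
    · show (0:ℝ) ≤ w ⬝ᵥ (∫ ω, Φ τ 0 ω * B * Bᵀ * (Φ τ 0 ω)ᵀ ∂μ) *ᵥ w
      rw [integral_undef hτ]
      simp
  have hqint : Integrable q (volume.restrict (Set.Icc 0 T)) := by
    have h1 : Integrable (fun τ => ∫ ω, Φ τ 0 ω * B * Bᵀ * (Φ τ 0 ω)ᵀ ∂μ)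
        (volume.restrict (Set.Icc 0 T)) := hint.integral_prod_left
    have h2 := (gdscQuadCLM n w).integrable_comp h1
    rw [hqdef]
    exact h2
  calc ∫ ω, (xu t ω ⬝ᵥ w) ^ 2 ∂μ
      ≤ ∫ ω, (∫ s in Set.Icc (0:ℝ) t,
          w ⬝ᵥ (Φ t s ω * B * Bᵀ * (Φ t s ω)ᵀ) *ᵥ w) * C ∂μ := by
        refine integral_mono_of_nonneg
          (Filter.Eventually.of_forall fun ω => sq_nonneg _)
          (hgint.integral_prod_right.mul_const _) ?_
        filter_upwards [hae] with ω hω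
        exact key ω hω
    _ = (∫ ω, (∫ s in Set.Icc (0:ℝ) t,
          w ⬝ᵥ (Φ t s ω * B * Bᵀ * (Φ t s ω)ᵀ) *ᵥ w) ∂μ) * C := by
        rw [integral_mul_const]
    _ = (∫ s in Set.Icc (0:ℝ) t, (∫ ω,
          w ⬝ᵥ (Φ t s ω * B * Bᵀ * (Φ t s ω)ᵀ) *ᵥ w ∂μ)) * C := by
        congr 1
        exact (integral_integral_swap
          (f := fun s ω => w ⬝ᵥ (Φ t s ω * B * Bᵀ * (Φ t s ω)ᵀ) *ᵥ w) hgint).symm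
    _ = (∫ s in Set.Icc (0:ℝ) t, q (t - s)) * C := by
        congr 1
        refine integral_congr_ae ?_
        have hsl : ∀ᵐ s ∂(volume.restrict (Set.Icc (0:ℝ) t)),
            Integrable (fun ω => Φ t s ω * B * Bᵀ * (Φ t s ω)ᵀ) μ :=
          (hint2 t ht).prod_right_ae
        filter_upwards [hsl, ae_restrict_mem measurableSet_Icc] with s hs hmem
        rw [hqdef]
        calc ∫ ω, w ⬝ᵥ (Φ t s ω * B * Bᵀ * (Φ t s ω)ᵀ) *ᵥ w ∂μ
            = w ⬝ᵥ (∫ ω, Φ t s ω * B * Bᵀ * (Φ t s ω)ᵀ ∂μ) *ᵥ w :=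
              ContinuousLinearMap.integral_comp_comm (gdscQuadCLM n w) hs
          _ = w ⬝ᵥ (∫ ω, Φ (t - s) 0 ω * B * Bᵀ * (Φ (t - s) 0 ω)ᵀ ∂μ) *ᵥ w := by
              rw [hsemi s t hmem.1 hmem.2 htT]
    _ = (∫ τ in Set.Icc (0:ℝ) t, q τ) * C := by
        congr 1
        rw [integral_Icc_eq_integral_Ioc, integral_Icc_eq_integral_Ioc,
          ← intervalIntegral.integral_of_le ht0, ← intervalIntegral.integral_of_le ht0]
        simpa using intervalIntegral.integral_comp_sub_left q t
    _ ≤ (∫ τ in Set.Icc (0:ℝ) T, q τ) * C := by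
        refine mul_le_mul_of_nonneg_right ?_ hC0
        exact setIntegral_mono_set hqint
          (Filter.Eventually.of_forall fun τ => hq0 τ)
          ((Set.Icc_subset_Icc le_rfl htT).eventuallyLE)
    _ = (w ⬝ᵥ P *ᵥ w) * C := by
        congr 1
        have h1 : Integrable
            (fun ω => ∫ s in Set.Icc (0:ℝ) T, Φ s 0 ω * B * Bᵀ * (Φ s 0 ω)ᵀ) μ :=
          hint.integral_prod_right
        have h2 := ContinuousLinearMap.integral_comp_comm (gdscQuadCLM n w) h1
        have h3 : ∀ᵐ ω ∂μ, Integrable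
            (fun s => Φ s 0 ω * B * Bᵀ * (Φ s 0 ω)ᵀ) (volume.restrict (Set.Icc 0 T)) :=
          hint.prod_left_ae
        calc ∫ τ in Set.Icc (0:ℝ) T, q τ
            = ∫ τ in Set.Icc (0:ℝ) T, (∫ ω,
                w ⬝ᵥ (Φ τ 0 ω * B * Bᵀ * (Φ τ 0 ω)ᵀ) *ᵥ w ∂μ) := by
              refine integral_congr_ae ?_
              filter_upwards [hint.prod_right_ae] with τ hτ
              rw [hqdef]
              exact (ContinuousLinearMap.integral_comp_comm (gdscQuadCLM n w) hτ).symm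
          _ = ∫ ω, (∫ τ in Set.Icc (0:ℝ) T,
                w ⬝ᵥ (Φ τ 0 ω * B * Bᵀ * (Φ τ 0 ω)ᵀ) *ᵥ w) ∂μ :=
              integral_integral_swap
                (f := fun τ ω => w ⬝ᵥ (Φ τ 0 ω * B * Bᵀ * (Φ τ 0 ω)ᵀ) *ᵥ w)
                ((gdscQuadCLM n w).integrable_comp hint)
          _ = ∫ ω, w ⬝ᵥ (∫ s in Set.Icc (0:ℝ) T, Φ s 0 ω * B * Bᵀ * (Φ s 0 ω)ᵀ) *ᵥ w ∂μ := by
              refine integral_congr_ae ?_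
              filter_upwards [h3] with ω hω
              exact ContinuousLinearMap.integral_comp_comm (gdscQuadCLM n w) hω
          _ = w ⬝ᵥ P *ᵥ w := by rw [hP]; exact h2
end

section
/- In the setting of the two preceding statements (a jointly measurable one-parameter process Φ(t) = Φ(t,0) and two-parameter process Φ(t,s) on a probability space, X₀ ∈ ℝ^{n×d}, B ∈ ℝ^{n×m}, a deterministic square-integrable control u, the weak semigroup property E[Φ(t,s) B Bᵀ Φ(t,s)ᵀ] = E[Φ(t−s) B Bᵀ Φ(t−s)ᵀ] for 0 ≤ s ≤ t ≤ T, and all Bochner integrals existing), define x(t) := Φ(t) X₀ z + ∫₀ᵗ Φ(t,s) B u(s) ds and the total Gramian P_T := P_{x₀,T} + P_{u,T}, where P_{x₀,T} = E[∫₀ᵀ Φ(t) X₀ X₀ᵀ Φ(t)ᵀ dt] and P_{u,T} = E[∫₀ᵀ Φ(s) B Bᵀ Φ(s)ᵀ ds]. Then for every z ∈ ℝ^d and w ∈ ℝ^n, ∫₀ᵀ E[⟨x(t), w⟩²] dt ≤ 2 (wᵀ P_T w) · max{‖z‖₂², T ∫₀ᵀ ‖u(s)‖₂² ds}. -/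
open MeasureTheory Matrix

attribute [local instance] Matrix.normedAddCommGroup Matrix.normedSpace

section auxlemmas

variable {n k : ℕ}

lemma aux_assoc4 (P : Matrix (Fin n) (Fin n) ℝ) (A : Matrix (Fin n) (Fin k) ℝ) :
    P * A * Aᵀ * Pᵀ = (P * A) * (P * A)ᵀ := by
  rw [Matrix.transpose_mul, ← Matrix.mul_assoc]

lemma aux_qf_eq_sum (w : Fin n → ℝ) (A : Matrix (Fin n) (Fin k) ℝ) :
    w ⬝ᵥ (A * Aᵀ) *ᵥ w = ∑ i, (w ᵥ* A) i ^ 2 := by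
  rw [← Matrix.mulVec_mulVec, Matrix.dotProduct_mulVec, Matrix.mulVec_transpose]
  simp [dotProduct, sq]

lemma aux_qf_nonneg (w : Fin n → ℝ) (A : Matrix (Fin n) (Fin k) ℝ) :
    0 ≤ w ⬝ᵥ (A * Aᵀ) *ᵥ w := by
  rw [aux_qf_eq_sum]
  positivity

lemma aux_sq_dot_le (w : Fin n → ℝ) (A : Matrix (Fin n) (Fin k) ℝ) (v : Fin k → ℝ) :
    ((A *ᵥ v) ⬝ᵥ w) ^ 2 ≤ (∑ i, v i ^ 2) * (w ⬝ᵥ (A * Aᵀ) *ᵥ w) := by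
  have h1 : (A *ᵥ v) ⬝ᵥ w = (w ᵥ* A) ⬝ᵥ v := by
    rw [dotProduct_comm, Matrix.dotProduct_mulVec]
  rw [h1, aux_qf_eq_sum, dotProduct]
  calc (∑ i, (w ᵥ* A) i * v i) ^ 2
      ≤ (∑ i, (w ᵥ* A) i ^ 2) * ∑ i, v i ^ 2 :=
        Finset.sum_mul_sq_le_sq_mul_sq Finset.univ _ _
    _ = (∑ i, v i ^ 2) * ∑ i, (w ᵥ* A) i ^ 2 := mul_comm _ _

/-- quadratic form as a continuous linear map -/
noncomputable def qfCLM (w : Fin n → ℝ) : Matrix (Fin n) (Fin n) ℝ →L[ℝ] ℝ :=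
  LinearMap.toContinuousLinearMap
  { toFun := fun M => w ⬝ᵥ M *ᵥ w
    map_add' := fun M N => by simp [Matrix.add_mulVec, dotProduct_add]
    map_smul' := fun c M => by simp [Matrix.smul_mulVec, dotProduct_smul] }

@[simp] lemma qfCLM_apply (w : Fin n → ℝ) (M : Matrix (Fin n) (Fin n) ℝ) :
    qfCLM w M = w ⬝ᵥ M *ᵥ w := rfl

/-- dot product with a fixed vector as a continuous linear map -/
noncomputable def dotCLM (w : Fin n → ℝ) : (Fin n → ℝ) →L[ℝ] ℝ :=
  LinearMap.toContinuousLinearMap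
  { toFun := fun v => v ⬝ᵥ w
    map_add' := fun a b => by simp [add_dotProduct]
    map_smul' := fun c a => by simp [smul_dotProduct] }

@[simp] lemma dotCLM_apply (w v : Fin n → ℝ) : dotCLM w v = v ⬝ᵥ w := rfl

/-- Cauchy-Schwarz style bound for integrals. -/
lemma aux_sq_integral_le {α : Type*} [MeasurableSpace α] {μ : Measure α} {f p r : α → ℝ}
    (hf : Integrable f μ)
    (hp : ∀ a, 0 ≤ p a) (hr : ∀ a, 0 ≤ r a)
    (hpm : AEStronglyMeasurable p μ) (hrm : AEStronglyMeasurable r μ)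
    (hp2 : Integrable (fun a => p a ^ 2) μ) (hr2 : Integrable (fun a => r a ^ 2) μ)
    (hle : ∀ a, |f a| ≤ p a * r a) :
    (∫ a, f a ∂μ) ^ 2 ≤ (∫ a, p a ^ 2 ∂μ) * ∫ a, r a ^ 2 ∂μ := by
  have hpr : Integrable (fun a => p a * r a) μ := by
    refine Integrable.mono' ((hp2.add hr2).div_const 2) (hpm.mul hrm) ?_
    refine Filter.Eventually.of_forall fun a => ?_
    simp only [Pi.add_apply]
    rw [Real.norm_of_nonneg (mul_nonneg (hp a) (hr a))]
    nlinarith [sq_nonneg (p a - r a)]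
  have h1 : |∫ a, f a ∂μ| ≤ ∫ a, p a * r a ∂μ := by
    rw [← Real.norm_eq_abs]
    refine (norm_integral_le_integral_norm _).trans ?_
    simp only [Real.norm_eq_abs]
    exact integral_mono hf.abs hpr hle
  have hIp : 0 ≤ ∫ a, p a ^ 2 ∂μ := integral_nonneg fun a => sq_nonneg _
  have hIr : 0 ≤ ∫ a, r a ^ 2 ∂μ := integral_nonneg fun a => sq_nonneg _
  have hpq : (2 : ℝ).HolderConjugate 2 := Real.holderConjugate_iff.mpr ⟨by norm_num, by norm_num⟩
  have hmp : MemLp p (ENNReal.ofReal 2) μ := by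
    rw [show ENNReal.ofReal 2 = 2 by norm_num]
    exact (memLp_two_iff_integrable_sq hpm).mpr hp2
  have hmr : MemLp r (ENNReal.ofReal 2) μ := by
    rw [show ENNReal.ofReal 2 = 2 by norm_num]
    exact (memLp_two_iff_integrable_sq hrm).mpr hr2
  have h2 := integral_mul_le_Lp_mul_Lq_of_nonneg hpq
    (Filter.Eventually.of_forall hp) (Filter.Eventually.of_forall hr) hmp hmr
  have hre : ∀ (g : α → ℝ), (∫ a, g a ^ (2:ℝ) ∂μ) = ∫ a, g a ^ 2 ∂μ := by
    intro g
    refine integral_congr_ae (Filter.Eventually.of_forall fun a => ?_)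
    simp [Real.rpow_natCast]
  rw [hre p, hre r] at h2
  calc (∫ a, f a ∂μ) ^ 2 = |∫ a, f a ∂μ| ^ 2 := (sq_abs _).symm
    _ ≤ (∫ a, p a * r a ∂μ) ^ 2 := by
        have h0 : (0:ℝ) ≤ |∫ a, f a ∂μ| := abs_nonneg _
        nlinarith
    _ ≤ ((∫ a, p a ^ 2 ∂μ) ^ (1/2 : ℝ) * (∫ a, r a ^ 2 ∂μ) ^ (1/2 : ℝ)) ^ 2 := by
        have h3 : 0 ≤ ∫ a, p a * r a ∂μ :=
          integral_nonneg fun a => mul_nonneg (hp a) (hr a)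
        have h4 : (0:ℝ) ≤ (∫ a, p a ^ 2 ∂μ) ^ (1/2 : ℝ) * (∫ a, r a ^ 2 ∂μ) ^ (1/2 : ℝ) :=
          mul_nonneg (Real.rpow_nonneg hIp _) (Real.rpow_nonneg hIr _)
        nlinarith
    _ = (∫ a, p a ^ 2 ∂μ) * ∫ a, r a ^ 2 ∂μ := by
        rw [mul_pow, ← Real.rpow_natCast ((∫ a, p a ^ 2 ∂μ) ^ (1/2:ℝ)) 2,
          ← Real.rpow_natCast ((∫ a, r a ^ 2 ∂μ) ^ (1/2:ℝ)) 2,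
          ← Real.rpow_mul hIp, ← Real.rpow_mul hIr]
        norm_num

end auxlemmas

set_option maxHeartbeats 2000000

/-- In the setting of the two previous statements (fundamental solution `Φ(t,s)` with
`Φ(τ) = Φ(τ,0)`, initial-state matrix `X₀`, input matrix `B`, deterministic
square-integrable control `u`, the weak semigroup property in second moments, and all
Bochner integrals existing), the solution
`x(t) = Φ(t) X₀ z + ∫₀ᵗ Φ(t,s) B u(s) ds` and the total Gramian
`P_T = P_{x₀,T} + P_{u,T}` satisfy
`∫₀ᵀ E[⟨x(t), w⟩²] dt ≤ 2 (wᵀ P_T w) max{‖z‖₂², T ∫₀ᵀ ‖u(s)‖₂² ds}`. -/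
theorem gramian_dominant_subspace_full_state
    {n d m : ℕ} {Ω : Type*} [MeasurableSpace Ω] (μ : Measure Ω) [IsProbabilityMeasure μ]
    (T : ℝ) (hT : 0 < T)
    (Φ : ℝ → ℝ → Ω → Matrix (Fin n) (Fin n) ℝ)  -- Φ t s ω, with Φ(τ) := Φ τ 0
    (X₀ : Matrix (Fin n) (Fin d) ℝ) (B : Matrix (Fin n) (Fin m) ℝ)
    (u : ℝ → Fin m → ℝ)
    (hu : IntegrableOn (fun s => ∑ i, u s i ^ 2) (Set.Icc (0 : ℝ) T))
    (hsemi : ∀ s t : ℝ, 0 ≤ s → s ≤ t → t ≤ T →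
      (∫ ω, Φ t s ω * B * Bᵀ * (Φ t s ω)ᵀ ∂μ)
        = ∫ ω, Φ (t - s) 0 ω * B * Bᵀ * (Φ (t - s) 0 ω)ᵀ ∂μ)
    (hintX : @Integrable _ _ SeminormedAddGroup.toContinuousENorm _ _ (fun p : ℝ × Ω => Φ p.1 0 p.2 * X₀ * X₀ᵀ * (Φ p.1 0 p.2)ᵀ)
      ((volume.restrict (Set.Icc 0 T)).prod μ))
    (hintB : @Integrable _ _ SeminormedAddGroup.toContinuousENorm _ _ (fun p : ℝ × Ω => Φ p.1 0 p.2 * B * Bᵀ * (Φ p.1 0 p.2)ᵀ)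
      ((volume.restrict (Set.Icc 0 T)).prod μ))
    (hintB2 : ∀ t ∈ Set.Icc (0 : ℝ) T,
      @Integrable _ _ SeminormedAddGroup.toContinuousENorm _ _ (fun p : ℝ × Ω => Φ t p.1 p.2 * B * Bᵀ * (Φ t p.1 p.2)ᵀ)
        ((volume.restrict (Set.Icc 0 t)).prod μ))
    (z : Fin d → ℝ)
    (x : ℝ → Ω → Fin n → ℝ)
    (hx : ∀ t ω, x t ω
      = Φ t 0 ω *ᵥ (X₀ *ᵥ z) + ∫ s in Set.Icc (0 : ℝ) t, Φ t s ω *ᵥ (B *ᵥ u s))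
    (Px₀ Pu PT : Matrix (Fin n) (Fin n) ℝ)
    (hPx₀ : Px₀ = ∫ ω, (∫ t in Set.Icc (0 : ℝ) T, Φ t 0 ω * X₀ * X₀ᵀ * (Φ t 0 ω)ᵀ) ∂μ)
    (hPu : Pu = ∫ ω, (∫ s in Set.Icc (0 : ℝ) T, Φ s 0 ω * B * Bᵀ * (Φ s 0 ω)ᵀ) ∂μ)
    (hPT : PT = Px₀ + Pu)
    (w : Fin n → ℝ) :
    (∫ t in Set.Icc (0 : ℝ) T, ∫ ω, (x t ω ⬝ᵥ w) ^ 2 ∂μ)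
      ≤ 2 * (w ⬝ᵥ PT *ᵥ w)
        * max (∑ i, z i ^ 2) (T * ∫ s in Set.Icc (0 : ℝ) T, ∑ i, u s i ^ 2) := by
  have hT0 : (0:ℝ) ≤ T := hT.le
  set c : ℝ := ∫ s in Set.Icc (0:ℝ) T, ∑ i, u s i ^ 2 with hc_def
  have hc0 : 0 ≤ c := integral_nonneg fun s => by positivity
  -- scalarized integrability on products
  have hLX : Integrable
      (fun p : ℝ × Ω => qfCLM w (Φ p.1 0 p.2 * X₀ * X₀ᵀ * (Φ p.1 0 p.2)ᵀ))
      ((volume.restrict (Set.Icc 0 T)).prod μ) := (qfCLM w).integrable_comp hintX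
  have hLB : Integrable
      (fun p : ℝ × Ω => qfCLM w (Φ p.1 0 p.2 * B * Bᵀ * (Φ p.1 0 p.2)ᵀ))
      ((volume.restrict (Set.Icc 0 T)).prod μ) := (qfCLM w).integrable_comp hintB
  set f : ℝ → ℝ := fun t => ∫ ω, qfCLM w (Φ t 0 ω * X₀ * X₀ᵀ * (Φ t 0 ω)ᵀ) ∂μ with hf_def
  set q : ℝ → ℝ := fun τ => ∫ ω, qfCLM w (Φ τ 0 ω * B * Bᵀ * (Φ τ 0 ω)ᵀ) ∂μ with hq_def
  have hf_nonneg : ∀ t, 0 ≤ f t := fun t => integral_nonneg fun ω => by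
    rw [qfCLM_apply, aux_assoc4]; exact aux_qf_nonneg _ _
  have hq_nonneg : ∀ τ, 0 ≤ q τ := fun τ => integral_nonneg fun ω => by
    rw [qfCLM_apply, aux_assoc4]; exact aux_qf_nonneg _ _
  have hf_int : Integrable f (volume.restrict (Set.Icc (0:ℝ) T)) := hLX.integral_prod_left
  have hq_int : Integrable q (volume.restrict (Set.Icc (0:ℝ) T)) := hLB.integral_prod_left
  -- quadratic form of the Gramians
  have hP1 : w ⬝ᵥ Px₀ *ᵥ w = ∫ t in Set.Icc (0:ℝ) T, f t := by
    have e1 : w ⬝ᵥ Px₀ *ᵥ w = qfCLM w Px₀ := rfl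
    erw [e1, hPx₀, ← ContinuousLinearMap.integral_comp_comm (qfCLM w) (φ := fun ω => ∫ t in Set.Icc (0:ℝ) T, Φ t 0 ω * X₀ * X₀ᵀ * (Φ t 0 ω)ᵀ) hintX.integral_prod_right]
    rw [show (∫ t in Set.Icc (0:ℝ) T, f t)
        = ∫ ω, (∫ t in Set.Icc (0:ℝ) T,
            qfCLM w (Φ t 0 ω * X₀ * X₀ᵀ * (Φ t 0 ω)ᵀ)) ∂μ from integral_integral_swap hLX]
    refine integral_congr_ae ?_
    filter_upwards [hintX.prod_left_ae] with ω hω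
    exact (ContinuousLinearMap.integral_comp_comm (qfCLM w) hω).symm
  have hP2 : w ⬝ᵥ Pu *ᵥ w = ∫ τ in Set.Icc (0:ℝ) T, q τ := by
    have e1 : w ⬝ᵥ Pu *ᵥ w = qfCLM w Pu := rfl
    erw [e1, hPu, ← ContinuousLinearMap.integral_comp_comm (qfCLM w) (φ := fun ω => ∫ s in Set.Icc (0:ℝ) T, Φ s 0 ω * B * Bᵀ * (Φ s 0 ω)ᵀ) hintB.integral_prod_right]
    rw [show (∫ τ in Set.Icc (0:ℝ) T, q τ)
        = ∫ ω, (∫ τ in Set.Icc (0:ℝ) T,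
            qfCLM w (Φ τ 0 ω * B * Bᵀ * (Φ τ 0 ω)ᵀ)) ∂μ from integral_integral_swap hLB]
    refine integral_congr_ae ?_
    filter_upwards [hintB.prod_left_ae] with ω hω
    exact (ContinuousLinearMap.integral_comp_comm (qfCLM w) hω).symm
  set Q : ℝ := w ⬝ᵥ Pu *ᵥ w with hQ_def
  have hQ0 : 0 ≤ Q := by rw [hP2]; exact integral_nonneg fun τ => hq_nonneg τ
  have hP1nn : 0 ≤ w ⬝ᵥ Px₀ *ᵥ w := by rw [hP1]; exact integral_nonneg fun t => hf_nonneg t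
  -- a.e. integrability of ω ↦ Φ(τ,0)BBᵀΦᵀ transported along s ↦ t - s
  have hae1 : ∀ᵐ τ ∂(volume : Measure ℝ), τ ∈ Set.Icc (0:ℝ) T →
      @Integrable _ _ SeminormedAddGroup.toContinuousENorm _ _ (fun ω => Φ τ 0 ω * B * Bᵀ * (Φ τ 0 ω)ᵀ) μ :=
    (ae_restrict_iff' measurableSet_Icc).mp hintB.prod_right_ae
  -- main pointwise-in-t bound
  have key : ∀ᵐ t ∂(volume.restrict (Set.Icc (0:ℝ) T)),
      (∫ ω, (x t ω ⬝ᵥ w) ^ 2 ∂μ) ≤ 2 * (∑ i, z i ^ 2) * f t + 2 * c * Q := by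
    filter_upwards [ae_restrict_mem measurableSet_Icc, hLX.prod_right_ae] with t ht hFt
    have hGint : Integrable
        (fun p : ℝ × Ω => qfCLM w (Φ t p.1 p.2 * B * Bᵀ * (Φ t p.1 p.2)ᵀ))
        ((volume.restrict (Set.Icc 0 t)).prod μ) := (qfCLM w).integrable_comp (hintB2 t ht)
    have hu_t : IntegrableOn (fun s => ∑ i, u s i ^ 2) (Set.Icc (0:ℝ) t) :=
      hu.mono_set (Set.Icc_subset_Icc_right ht.2)
    -- step 1: per-ω pointwise bound, integrated in ω
    have step1 : (∫ ω, (x t ω ⬝ᵥ w) ^ 2 ∂μ)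
        ≤ ∫ ω, (2 * (∑ i, z i ^ 2) * qfCLM w (Φ t 0 ω * X₀ * X₀ᵀ * (Φ t 0 ω)ᵀ)
            + 2 * c * ∫ s in Set.Icc (0:ℝ) t,
                qfCLM w (Φ t s ω * B * Bᵀ * (Φ t s ω)ᵀ)) ∂μ := by
      refine integral_mono_of_nonneg (Filter.Eventually.of_forall fun ω => sq_nonneg _)
        ((hFt.const_mul _).add (hGint.integral_prod_right.const_mul _)) ?_
      filter_upwards [hGint.prod_left_ae] with ω hGω
      have hInn : (0:ℝ) ≤ ∫ s in Set.Icc (0:ℝ) t,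
          qfCLM w (Φ t s ω * B * Bᵀ * (Φ t s ω)ᵀ) :=
        integral_nonneg fun s => by rw [qfCLM_apply, aux_assoc4]; exact aux_qf_nonneg _ _
      have ha2 : ((Φ t 0 ω *ᵥ (X₀ *ᵥ z)) ⬝ᵥ w) ^ 2
          ≤ (∑ i, z i ^ 2) * qfCLM w (Φ t 0 ω * X₀ * X₀ᵀ * (Φ t 0 ω)ᵀ) := by
        rw [Matrix.mulVec_mulVec, qfCLM_apply, aux_assoc4]
        exact aux_sq_dot_le w _ z
      have hb2 : ((∫ s in Set.Icc (0:ℝ) t, Φ t s ω *ᵥ (B *ᵥ u s)) ⬝ᵥ w) ^ 2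
          ≤ c * ∫ s in Set.Icc (0:ℝ) t, qfCLM w (Φ t s ω * B * Bᵀ * (Φ t s ω)ᵀ) := by
        by_cases hvint : Integrable (fun s => Φ t s ω *ᵥ (B *ᵥ u s))
            (volume.restrict (Set.Icc (0:ℝ) t))
        · have hb : (∫ s in Set.Icc (0:ℝ) t, Φ t s ω *ᵥ (B *ᵥ u s)) ⬝ᵥ w
              = ∫ s in Set.Icc (0:ℝ) t, (Φ t s ω *ᵥ (B *ᵥ u s)) ⬝ᵥ w :=
            (ContinuousLinearMap.integral_comp_comm (dotCLM w) hvint).symm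
          rw [hb]
          have hle : ∀ s, |(Φ t s ω *ᵥ (B *ᵥ u s)) ⬝ᵥ w|
              ≤ Real.sqrt (∑ i, u s i ^ 2)
                * Real.sqrt (qfCLM w (Φ t s ω * B * Bᵀ * (Φ t s ω)ᵀ)) := by
            intro s
            have h1 : (((Φ t s ω * B) *ᵥ u s) ⬝ᵥ w) ^ 2
                ≤ (∑ i, u s i ^ 2) * qfCLM w (Φ t s ω * B * Bᵀ * (Φ t s ω)ᵀ) := by
              rw [qfCLM_apply, aux_assoc4]
              exact aux_sq_dot_le w _ (u s)
            rw [Matrix.mulVec_mulVec]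
            calc |((Φ t s ω * B) *ᵥ u s) ⬝ᵥ w|
                = Real.sqrt ((((Φ t s ω * B) *ᵥ u s) ⬝ᵥ w) ^ 2) :=
                  (Real.sqrt_sq_eq_abs _).symm
              _ ≤ Real.sqrt ((∑ i, u s i ^ 2)
                    * qfCLM w (Φ t s ω * B * Bᵀ * (Φ t s ω)ᵀ)) :=
                  Real.sqrt_le_sqrt h1
              _ = _ := Real.sqrt_mul (by positivity) _
          have hcs := aux_sq_integral_le (μ := volume.restrict (Set.Icc (0:ℝ) t))
            ((dotCLM w).integrable_comp hvint)
            (fun s => Real.sqrt_nonneg _) (fun s => Real.sqrt_nonneg _)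
            (Real.continuous_sqrt.comp_aestronglyMeasurable hu_t.aestronglyMeasurable)
            (Real.continuous_sqrt.comp_aestronglyMeasurable hGω.aestronglyMeasurable)
            ?_ ?_ hle
          · have e1 : (∫ s in Set.Icc (0:ℝ) t, Real.sqrt (∑ i, u s i ^ 2) ^ 2)
                = ∫ s in Set.Icc (0:ℝ) t, ∑ i, u s i ^ 2 :=
              integral_congr_ae (Filter.Eventually.of_forall fun s =>
                Real.sq_sqrt (by positivity))
            have e2 : (∫ s in Set.Icc (0:ℝ) t,
                  Real.sqrt (qfCLM w (Φ t s ω * B * Bᵀ * (Φ t s ω)ᵀ)) ^ 2)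
                = ∫ s in Set.Icc (0:ℝ) t, qfCLM w (Φ t s ω * B * Bᵀ * (Φ t s ω)ᵀ) :=
              integral_congr_ae (Filter.Eventually.of_forall fun s =>
                Real.sq_sqrt (by rw [qfCLM_apply, aux_assoc4]; exact aux_qf_nonneg _ _))
            rw [e1, e2] at hcs
            refine hcs.trans ?_
            have hult : (∫ s in Set.Icc (0:ℝ) t, ∑ i, u s i ^ 2) ≤ c := by
              rw [hc_def]
              refine setIntegral_mono_set hu ?_ ?_
              · exact Filter.Eventually.of_forall fun s => by positivity
              · exact (Set.Icc_subset_Icc_right ht.2).eventuallyLE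
            exact mul_le_mul_of_nonneg_right hult hInn
          · exact hu_t.congr (Filter.Eventually.of_forall fun s =>
              (Real.sq_sqrt (by positivity : (0:ℝ) ≤ ∑ i, u s i ^ 2)).symm)
          · exact hGω.congr (Filter.Eventually.of_forall fun s =>
              (Real.sq_sqrt (by rw [qfCLM_apply, aux_assoc4]; exact aux_qf_nonneg _ _ :
                (0:ℝ) ≤ qfCLM w (Φ t s ω * B * Bᵀ * (Φ t s ω)ᵀ))).symm)
        · rw [integral_undef hvint, zero_dotProduct]
          simpa using mul_nonneg hc0 hInn
      rw [hx t ω, add_dotProduct]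
      nlinarith [ha2, hb2, sq_nonneg ((Φ t 0 ω *ᵥ (X₀ *ᵥ z)) ⬝ᵥ w
        - (∫ s in Set.Icc (0:ℝ) t, Φ t s ω *ᵥ (B *ᵥ u s)) ⬝ᵥ w)]
    -- step 2: evaluate the ω-integral and bound the double integral by Q
    have step2 : (∫ ω, (2 * (∑ i, z i ^ 2)
            * qfCLM w (Φ t 0 ω * X₀ * X₀ᵀ * (Φ t 0 ω)ᵀ)
          + 2 * c * ∫ s in Set.Icc (0:ℝ) t,
              qfCLM w (Φ t s ω * B * Bᵀ * (Φ t s ω)ᵀ)) ∂μ)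
        = 2 * (∑ i, z i ^ 2) * f t
          + 2 * c * ∫ ω, (∫ s in Set.Icc (0:ℝ) t,
              qfCLM w (Φ t s ω * B * Bᵀ * (Φ t s ω)ᵀ)) ∂μ := by
      rw [integral_add (hFt.const_mul _) (hGint.integral_prod_right.const_mul _),
        integral_const_mul, integral_const_mul]
    have hDle : (∫ ω, (∫ s in Set.Icc (0:ℝ) t,
        qfCLM w (Φ t s ω * B * Bᵀ * (Φ t s ω)ᵀ)) ∂μ) ≤ Q := by
      have hsw : (∫ ω, (∫ s in Set.Icc (0:ℝ) t,
            qfCLM w (Φ t s ω * B * Bᵀ * (Φ t s ω)ᵀ)) ∂μ)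
          = ∫ s in Set.Icc (0:ℝ) t, (∫ ω,
              qfCLM w (Φ t s ω * B * Bᵀ * (Φ t s ω)ᵀ) ∂μ) :=
        (integral_integral_swap hGint).symm
      have hmp : MeasurePreserving (fun s : ℝ => t - s) volume volume := by
        have h0 := (measurePreserving_add_left (volume : Measure ℝ) t).comp
          (Measure.measurePreserving_neg (volume : Measure ℝ))
        simp only [Function.comp_def, sub_eq_add_neg] at h0 ⊢
        exact h0
      have hae2 : ∀ᵐ s ∂(volume : Measure ℝ), (t - s) ∈ Set.Icc (0:ℝ) T →
          @Integrable _ _ SeminormedAddGroup.toContinuousENorm _ _ (fun ω => Φ (t - s) 0 ω * B * Bᵀ * (Φ (t - s) 0 ω)ᵀ) μ :=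
        hmp.quasiMeasurePreserving.ae hae1
      have hcongr : (∫ s in Set.Icc (0:ℝ) t, (∫ ω,
            qfCLM w (Φ t s ω * B * Bᵀ * (Φ t s ω)ᵀ) ∂μ))
          = ∫ s in Set.Icc (0:ℝ) t, q (t - s) := by
        refine integral_congr_ae ?_
        filter_upwards [ae_restrict_mem measurableSet_Icc, (hintB2 t ht).prod_right_ae,
          ae_restrict_of_ae hae2] with s hs hGs hτint
        have hmem : t - s ∈ Set.Icc (0:ℝ) T :=
          ⟨by linarith [hs.2], by linarith [hs.1, ht.2]⟩
        have hτ := hτint hmem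
        calc (∫ ω, qfCLM w (Φ t s ω * B * Bᵀ * (Φ t s ω)ᵀ) ∂μ)
            = qfCLM w (∫ ω, Φ t s ω * B * Bᵀ * (Φ t s ω)ᵀ ∂μ) :=
              ContinuousLinearMap.integral_comp_comm _ hGs
          _ = qfCLM w (∫ ω, Φ (t - s) 0 ω * B * Bᵀ * (Φ (t - s) 0 ω)ᵀ ∂μ) := by
              rw [hsemi s t hs.1 hs.2 ht.2]
          _ = ∫ ω, qfCLM w (Φ (t - s) 0 ω * B * Bᵀ * (Φ (t - s) 0 ω)ᵀ) ∂μ :=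
              (ContinuousLinearMap.integral_comp_comm _ hτ).symm
          _ = q (t - s) := rfl
      have hchg : (∫ s in Set.Icc (0:ℝ) t, q (t - s)) = ∫ τ in Set.Icc (0:ℝ) t, q τ := by
        rw [MeasureTheory.integral_Icc_eq_integral_Ioc,
          MeasureTheory.integral_Icc_eq_integral_Ioc,
          ← intervalIntegral.integral_of_le ht.1, ← intervalIntegral.integral_of_le ht.1]
        have h := intervalIntegral.integral_comp_sub_left (a := 0) (b := t) q t
        simp only [sub_self, sub_zero] at h
        exact h
      have hmono : (∫ τ in Set.Icc (0:ℝ) t, q τ) ≤ ∫ τ in Set.Icc (0:ℝ) T, q τ := by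
        refine setIntegral_mono_set hq_int ?_ ?_
        · exact Filter.Eventually.of_forall fun τ => hq_nonneg τ
        · exact (Set.Icc_subset_Icc_right ht.2).eventuallyLE
      rw [hsw, hcongr, hchg, hP2]
      exact hmono
    refine (step1.trans_eq step2).trans ?_
    have := mul_le_mul_of_nonneg_left hDle (by positivity : (0:ℝ) ≤ 2 * c)
    linarith
  -- integrate the key bound in t
  have hconst_int : Integrable (fun _ : ℝ => 2 * c * Q)
      (volume.restrict (Set.Icc (0:ℝ) T)) := by
    refine integrable_const_iff.mpr (Or.inr ⟨?_⟩)
    rw [Measure.restrict_apply_univ, Real.volume_Icc]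
    exact ENNReal.ofReal_lt_top
  have hfinal : (∫ t in Set.Icc (0:ℝ) T, ∫ ω, (x t ω ⬝ᵥ w) ^ 2 ∂μ)
      ≤ 2 * (∑ i, z i ^ 2) * (∫ t in Set.Icc (0:ℝ) T, f t) + 2 * c * Q * T := by
    have h1 : (∫ t in Set.Icc (0:ℝ) T, ∫ ω, (x t ω ⬝ᵥ w) ^ 2 ∂μ)
        ≤ ∫ t in Set.Icc (0:ℝ) T, (2 * (∑ i, z i ^ 2) * f t + 2 * c * Q) :=
      integral_mono_of_nonneg
        (Filter.Eventually.of_forall fun t => integral_nonneg fun ω => sq_nonneg _)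
        ((hf_int.const_mul _).add hconst_int) key
    have h2 : (∫ t in Set.Icc (0:ℝ) T, (2 * (∑ i, z i ^ 2) * f t + 2 * c * Q))
        = 2 * (∑ i, z i ^ 2) * (∫ t in Set.Icc (0:ℝ) T, f t) + 2 * c * Q * T := by
      rw [integral_add (hf_int.const_mul _) hconst_int, integral_const_mul,
        setIntegral_const]
      rw [measureReal_def, Real.volume_Icc]
      rw [smul_eq_mul, ENNReal.toReal_ofReal (by linarith)]
      ring
    linarith
  -- conclusion
  have hPTw : w ⬝ᵥ PT *ᵥ w = (w ⬝ᵥ Px₀ *ᵥ w) + Q := by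
    rw [hPT, Matrix.add_mulVec, dotProduct_add, ← hQ_def]
  set M : ℝ := max (∑ i, z i ^ 2) (T * c) with hM_def
  have hM1 : (∑ i, z i ^ 2) ≤ M := le_max_left _ _
  have hM2 : T * c ≤ M := le_max_right _ _
  refine hfinal.trans ?_
  rw [hPTw, hP1]
  have hfT : 0 ≤ ∫ t in Set.Icc (0:ℝ) T, f t := integral_nonneg fun t => hf_nonneg t
  nlinarith [mul_le_mul_of_nonneg_right hM1 hfT, mul_le_mul_of_nonneg_right hM2 hQ0]
end

section
/- Let n, r, m, p, q ∈ ℕ, Ã ∈ ℝ^{n×n}, Â ∈ ℝ^{r×r}, Ñ₁, …, Ñ_q ∈ ℝ^{n×n}, N̂₁, …, N̂_q ∈ ℝ^{r×r}, B̃ ∈ ℝ^{n×m}, B₁ ∈ ℝ^{r×m}, C̃ ∈ ℝ^{p×n}, C₁ ∈ ℝ^{p×r}. Suppose P̂ ∈ ℝ^{n×r} satisfies Ã P̂ + P̂ Âᵀ + Σ_{i=1}^q Ñᵢ P̂ N̂ᵢᵀ = −B̃ B₁ᵀ and Q̂ ∈ ℝ^{r×n} satisfies Âᵀ Q̂ +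 Q̂ Ã + Σ_{i=1}^q N̂ᵢᵀ Q̂ Ñᵢ = −C₁ᵀ C̃. Then trace(C̃ P̂ C₁ᵀ) = trace(Q̂ B̃ B₁ᵀ). -/
open Matrix

/-- Trace identity for the mixed Gramians of a full-order system (coefficients
`Ã, Ñᵢ, B̃, C̃`) and a reduced-order system (coefficients `Â, N̂ᵢ, B₁, C₁`): if
`Ã P̂ + P̂ Âᵀ + Σᵢ Ñᵢ P̂ N̂ᵢᵀ = −B̃ B₁ᵀ` and `Âᵀ Q̂ + Q̂ Ã + Σᵢ N̂ᵢᵀ Q̂ Ñᵢ = −C₁ᵀ C̃`, then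
`trace(C̃ P̂ C₁ᵀ) = trace(Q̂ B̃ B₁ᵀ)`. -/
theorem mixed_gramian_trace_identity
    {n r m p q : ℕ}
    (Atil : Matrix (Fin n) (Fin n) ℝ) (Ahat : Matrix (Fin r) (Fin r) ℝ)
    (Ntil : Fin q → Matrix (Fin n) (Fin n) ℝ) (Nhat : Fin q → Matrix (Fin r) (Fin r) ℝ)
    (Btil : Matrix (Fin n) (Fin m) ℝ) (B₁ : Matrix (Fin r) (Fin m) ℝ)
    (Ctil : Matrix (Fin p) (Fin n) ℝ) (C₁ : Matrix (Fin p) (Fin r) ℝ)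
    (Phat : Matrix (Fin n) (Fin r) ℝ) (Qhat : Matrix (Fin r) (Fin n) ℝ)
    (hPhat : Atil * Phat + Phat * Ahatᵀ + ∑ i, Ntil i * Phat * (Nhat i)ᵀ = -(Btil * B₁ᵀ))
    (hQhat : Ahatᵀ * Qhat + Qhat * Atil + ∑ i, (Nhat i)ᵀ * Qhat * Ntil i = -(C₁ᵀ * Ctil)) :
    (Ctil * Phat * C₁ᵀ).trace = (Qhat * Btil * B₁ᵀ).trace := by
  have key : ((Ahatᵀ * Qhat + Qhat * Atil + ∑ i, (Nhat i)ᵀ * Qhat * Ntil i) * Phat).trace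
      = (Qhat * (Atil * Phat + Phat * Ahatᵀ + ∑ i, Ntil i * Phat * (Nhat i)ᵀ)).trace := by
    simp only [Matrix.mul_add, Matrix.add_mul, Matrix.sum_mul, Matrix.mul_sum,
      Matrix.trace_add, Matrix.trace_sum]
    have h1 : (Ahatᵀ * Qhat * Phat).trace = (Qhat * (Phat * Ahatᵀ)).trace := by
      rw [Matrix.mul_assoc, Matrix.trace_mul_comm, Matrix.mul_assoc]
    have h2 : (Qhat * Atil * Phat).trace = (Qhat * (Atil * Phat)).trace := by
      rw [Matrix.mul_assoc]
    have h3 : ∀ i, ((Nhat i)ᵀ * Qhat * Ntil i * Phat).trace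
        = (Qhat * (Ntil i * Phat * (Nhat i)ᵀ)).trace := by
      intro i
      rw [Matrix.mul_assoc, Matrix.mul_assoc, Matrix.trace_mul_comm, Matrix.mul_assoc]
    rw [h1, h2]
    rw [Finset.sum_congr rfl fun i _ => h3 i]
    ring
  have lhs : (Ctil * Phat * C₁ᵀ).trace = (C₁ᵀ * Ctil * Phat).trace := by
    rw [Matrix.trace_mul_cycle]
  rw [lhs]
  have : (C₁ᵀ * Ctil * Phat).trace = -((Ahatᵀ * Qhat + Qhat * Atil + ∑ i, (Nhat i)ᵀ * Qhat * Ntil i) * Phat).trace := by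
    rw [hQhat]
    simp [Matrix.neg_mul]
  rw [this, key, hPhat]
  simp [Matrix.mul_neg, Matrix.mul_assoc]
end

section
/- Let r, p, q ∈ ℕ, A, N₁, …, N_q ∈ ℝ^{r×r}, C ∈ ℝ^{p×r}, and D, Q, R ∈ ℝ^{r×r}. Suppose Aᵀ Q + Q A + Σ_{i=1}^q Nᵢᵀ Q Nᵢ = −Cᵀ C and A D + D Aᵀ + Σ_{i=1}^q Nᵢ D Nᵢᵀ = R. Then trace(C D Cᵀ) = −trace(Q R). -/
open Matrix

/-- Trace duality for generalized Lyapunov equations: if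
`Aᵀ Q + Q A + Σᵢ Nᵢᵀ Q Nᵢ = −Cᵀ C` and `A D + D Aᵀ + Σᵢ Nᵢ D Nᵢᵀ = R`, then
`trace(C D Cᵀ) = −trace(Q R)`. -/
theorem lyapunov_trace_duality
    {r p q : ℕ}
    (A : Matrix (Fin r) (Fin r) ℝ) (N : Fin q → Matrix (Fin r) (Fin r) ℝ)
    (C : Matrix (Fin p) (Fin r) ℝ) (D Q R : Matrix (Fin r) (Fin r) ℝ)
    (hQ : Aᵀ * Q + Q * A + ∑ i, (N i)ᵀ * Q * N i = -(Cᵀ * C))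
    (hD : A * D + D * Aᵀ + ∑ i, N i * D * (N i)ᵀ = R) :
    (C * D * Cᵀ).trace = -(Q * R).trace := by
  have h1 : (C * D * Cᵀ).trace = (Cᵀ * C * D).trace := trace_mul_cycle C D Cᵀ
  rw [h1, ← hD, ← neg_eq_iff_eq_neg.mpr hQ]
  rw [neg_mul, trace_neg, mul_add, mul_add, trace_add, trace_add]
  rw [add_mul, add_mul, trace_add, trace_add]
  rw [Finset.mul_sum, Finset.sum_mul, trace_sum, trace_sum]
  have e1 : (Aᵀ * Q * D).trace = (Q * (D * Aᵀ)).trace := by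
    rw [show Q * (D * Aᵀ) = Q * D * Aᵀ from (mul_assoc Q D Aᵀ).symm]
    exact (trace_mul_cycle Q D Aᵀ).symm
  have e2 : (Q * A * D).trace = (Q * (A * D)).trace := by rw [mul_assoc]
  have e3 : ∀ i, ((N i)ᵀ * Q * N i * D).trace = (Q * (N i * D * (N i)ᵀ)).trace := by
    intro i
    rw [show (N i)ᵀ * Q * N i * D = (N i)ᵀ * (Q * (N i * D)) by simp [mul_assoc],
      trace_mul_comm,
      show Q * (N i * D * (N i)ᵀ) = Q * (N i * D) * (N i)ᵀ by simp [mul_assoc]]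
  rw [e1, e2, Finset.sum_congr rfl (fun i _ => e3 i)]
  ring
end

section
/- Let n = r + s and partition Ã_N ∈ ℝ^{n×n} into blocks A_{N,11} ∈ ℝ^{r×r}, A_{N,12} ∈ ℝ^{r×s}, A_{N,21} ∈ ℝ^{s×r}, A_{N,22} ∈ ℝ^{s×s}, and similarly partition Ñᵢ ∈ ℝ^{n×n} into blocks N_{i,11}, N_{i,12}, N_{i,21}, N_{i,22} for i = 1, …, q, and B̃ ∈ ℝ^{n×m} into B₁ ∈ ℝ^{r×m}, B₂ ∈ ℝ^{s×m}. Let Δ := Σ_{i=1}^q N_{i,12} N_{i,21} ∈ ℝ^{r×r}. Suppose the block-diagonal matrix Σ = diag(Σ₁, Σ₂), with Σ₁ ∈ ℝ^{r×r} and Σ₂ ∈ ℝ^{s×s}, satisfies the generalized Lyapunov equation Ã_N Σ + Σ Ã_Nᵀ + Σ_{i=1}^q Ñᵢ Σ Ñᵢᵀ = −B̃ B̃ᵀ, and suppose P_r ∈ ℝ^{r×r} satisfies (A_{N,11} − ½Δ) P_r + P_r (A_{N,11} − ½Δ)ᵀ + Σ_{i=1}^q N_{i,11} P_r N_{i,11}ᵀ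 = −B₁ B₁ᵀ. Then the difference D := P_r − Σ₁ satisfies (A_{N,11} − ½Δ) D + D (A_{N,11} − ½Δ)ᵀ + Σ_{i=1}^q N_{i,11} D N_{i,11}ᵀ = Σ_{i=1}^q N_{i,12} Σ₂ N_{i,12}ᵀ + ½ Δ Σ₁ + ½ Σ₁ Δᵀ. -/
open Matrix


lemma toBlocks₁₁_sum {α n₁ n₂ m₁ m₂ ι : Type*} [AddCommMonoid α] (s : Finset ι)
    (f : ι → Matrix (n₁ ⊕ n₂) (m₁ ⊕ m₂) α) :
    (∑ i ∈ s, f i).toBlocks₁₁ = ∑ i ∈ s, (f i).toBlocks₁₁ := by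
  ext i j
  simp [Matrix.toBlocks₁₁, Matrix.sum_apply]

lemma toBlocks₁₁_add {α n₁ n₂ m₁ m₂ : Type*} [AddCommMonoid α]
    (X Y : Matrix (n₁ ⊕ n₂) (m₁ ⊕ m₂) α) :
    (X + Y).toBlocks₁₁ = X.toBlocks₁₁ + Y.toBlocks₁₁ := rfl

lemma toBlocks₁₁_neg {α n₁ n₂ m₁ m₂ : Type*} [AddCommGroup α]
    (X : Matrix (n₁ ⊕ n₂) (m₁ ⊕ m₂) α) :
    (-X).toBlocks₁₁ = -X.toBlocks₁₁ := rfl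

/-- Comparison of the reduced Gramian `P_r` with the retained block `Σ₁` of the balanced
full-order Gramian `Σ = diag(Σ₁, Σ₂)` for projection-based reduced Stratonovich systems:
if `Ã_N Σ + Σ Ã_Nᵀ + Σᵢ Ñᵢ Σ Ñᵢᵀ = −B̃ B̃ᵀ` (with the block partitions of `Ã_N`, `Ñᵢ`, `B̃`)
and `(A_{N,11} − ½Δ) P_r + P_r (A_{N,11} − ½Δ)ᵀ + Σᵢ N_{i,11} P_r N_{i,11}ᵀ = −B₁ B₁ᵀ` where
`Δ = Σᵢ N_{i,12} N_{i,21}`, then `D = P_r − Σ₁` satisfies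
`(A_{N,11} − ½Δ) D + D (A_{N,11} − ½Δ)ᵀ + Σᵢ N_{i,11} D N_{i,11}ᵀ
  = Σᵢ N_{i,12} Σ₂ N_{i,12}ᵀ + ½ Δ Σ₁ + ½ Σ₁ Δᵀ`. -/
theorem reduced_gramian_difference_equation
    {r s m q : ℕ}
    (A11 : Matrix (Fin r) (Fin r) ℝ) (A12 : Matrix (Fin r) (Fin s) ℝ)
    (A21 : Matrix (Fin s) (Fin r) ℝ) (A22 : Matrix (Fin s) (Fin s) ℝ)
    (N11 : Fin q → Matrix (Fin r) (Fin r) ℝ) (N12 : Fin q → Matrix (Fin r) (Fin s) ℝ)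
    (N21 : Fin q → Matrix (Fin s) (Fin r) ℝ) (N22 : Fin q → Matrix (Fin s) (Fin s) ℝ)
    (B₁ : Matrix (Fin r) (Fin m) ℝ) (B₂ : Matrix (Fin s) (Fin m) ℝ)
    (Sig1 : Matrix (Fin r) (Fin r) ℝ) (Sig2 : Matrix (Fin s) (Fin s) ℝ)
    (Pr : Matrix (Fin r) (Fin r) ℝ)
    (Δ : Matrix (Fin r) (Fin r) ℝ) (hΔ : Δ = ∑ i, N12 i * N21 i)
    (hSig : (fromBlocks A11 A12 A21 A22) * (fromBlocks Sig1 0 0 Sig2)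
        + (fromBlocks Sig1 0 0 Sig2) * (fromBlocks A11 A12 A21 A22)ᵀ
        + ∑ i, (fromBlocks (N11 i) (N12 i) (N21 i) (N22 i)) * (fromBlocks Sig1 0 0 Sig2)
            * (fromBlocks (N11 i) (N12 i) (N21 i) (N22 i))ᵀ
        = -((fromRows B₁ B₂) * (fromRows B₁ B₂)ᵀ))
    (hPr : (A11 - (1/2 : ℝ) • Δ) * Pr + Pr * (A11 - (1/2 : ℝ) • Δ)ᵀ
        + ∑ i, N11 i * Pr * (N11 i)ᵀ = -(B₁ * B₁ᵀ)) :
    (A11 - (1/2 : ℝ) • Δ) * (Pr - Sig1) + (Pr - Sig1) * (A11 - (1/2 : ℝ) • Δ)ᵀ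
        + ∑ i, N11 i * (Pr - Sig1) * (N11 i)ᵀ
      = (∑ i, N12 i * Sig2 * (N12 i)ᵀ)
        + (1/2 : ℝ) • (Δ * Sig1) + (1/2 : ℝ) • (Sig1 * Δᵀ) := by
  have h11 := congrArg Matrix.toBlocks₁₁ hSig
  rw [transpose_fromRows, fromRows_mul_fromCols] at h11
  simp only [fromBlocks_transpose, fromBlocks_multiply, toBlocks₁₁_sum, toBlocks₁₁_add,
    toBlocks₁₁_neg, toBlocks_fromBlocks₁₁, Matrix.mul_zero, Matrix.zero_mul, add_zero,
    zero_add] at h11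
  rw [Finset.sum_add_distrib] at h11
  have h11' : A11 * Sig1 + Sig1 * A11ᵀ + ∑ i, N11 i * Sig1 * (N11 i)ᵀ
      = -(B₁ * B₁ᵀ) - ∑ i, N12 i * Sig2 * (N12 i)ᵀ := by
    rw [← h11]; abel
  have key : (A11 - (1/2 : ℝ) • Δ) * (Pr - Sig1) + (Pr - Sig1) * (A11 - (1/2 : ℝ) • Δ)ᵀ
        + ∑ i, N11 i * (Pr - Sig1) * (N11 i)ᵀ
      = ((A11 - (1/2 : ℝ) • Δ) * Pr + Pr * (A11 - (1/2 : ℝ) • Δ)ᵀ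
          + ∑ i, N11 i * Pr * (N11 i)ᵀ)
        - (A11 * Sig1 + Sig1 * A11ᵀ + ∑ i, N11 i * Sig1 * (N11 i)ᵀ)
        + (1/2 : ℝ) • (Δ * Sig1) + (1/2 : ℝ) • (Sig1 * Δᵀ) := by
    simp only [mul_sub, sub_mul, Matrix.transpose_sub, Matrix.transpose_smul,
      Matrix.smul_mul, Matrix.mul_smul, Finset.sum_sub_distrib]
    module
  rw [key, hPr, h11']
  module
end
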